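/- Let ξ, η be nonincreasing nonnegative sequences converging to 0 with ξ ≺ η, and for t ≥ 0 define η(t) by η(t)_n = min(t, η_n). Then there is a minimal t ∈ [ξ_1, η_1] such that ξ ≺ η(t), and for that minimal t one has inf_k ∑_{j=1}^k (η(t)_j − ξ_j) = 0; moreover either ξ ≼ η(t) or ∑_{j=1}^n (η(t)_j − ξ_j) = 0 for some integer n ≥ 1. -/

import Mathlib

open Finset Filter Topology

theorem stmt5 (ξ η : ℕ → ℝ)
    (hξa : Antitone ξ) (hξ0 : ∀ n, 0 ≤ ξ n) (hξl : Tendsto ξ atTop (nhds 0))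
    (hηa : Antitone η) (hη0 : ∀ n, 0 ≤ η n) (hηl : Tendsto η atTop (nhds 0))
    (hmaj : ∀ n, ∑ j ∈ Finset.range n, ξ j ≤ ∑ j ∈ Finset.range n, η j) :
    ∃ t : ℝ, ξ 0 ≤ t ∧ t ≤ η 0 ∧
      (∀ n, ∑ j ∈ Finset.range n, ξ j ≤ ∑ j ∈ Finset.range n, min t (η j)) ∧
      (∀ s, ξ 0 ≤ s → s ≤ η 0 →
        (∀ n, ∑ j ∈ Finset.range n, ξ j ≤ ∑ j ∈ Finset.range n, min s (η j)) → t ≤ s) ∧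
      (⨅ k : ℕ, ∑ j ∈ Finset.range (k + 1), (min t (η j) - ξ j)) = 0 ∧
      (Filter.liminf (fun n => ∑ j ∈ Finset.range n, (min t (η j) - ξ j)) atTop = 0 ∨
        ∃ n, 1 ≤ n ∧ ∑ j ∈ Finset.range n, (min t (η j) - ξ j) = 0) := by
  have hξη0 : ξ 0 ≤ η 0 := by
    have := hmaj 1; simpa using this
  set S : Set ℝ := {s | ξ 0 ≤ s ∧
    ∀ n, ∑ j ∈ Finset.range n, ξ j ≤ ∑ j ∈ Finset.range n, min s (η j)} with hS
  have hη0S : η 0 ∈ S := by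
    refine ⟨hξη0, fun n => ?_⟩
    have : ∀ j, min (η 0) (η j) = η j := fun j => min_eq_right (hηa (Nat.zero_le j))
    simp_rw [this]; exact hmaj n
  have hSne : S.Nonempty := ⟨η 0, hη0S⟩
  have hSbdd : BddBelow S := ⟨ξ 0, fun s hs => hs.1⟩
  set t := sInf S with ht
  have htlb : ξ 0 ≤ t := le_csInf hSne fun s hs => hs.1
  have htub : t ≤ η 0 := csInf_le hSbdd hη0S
  -- the condition holds at t
  have hmin_lip : ∀ (a b : ℝ) (c : ℝ), a ≤ b → min b c ≤ min a c + (b - a) := by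
    intro a b c hab
    rcases le_total c a with h | h
    · rw [min_eq_right h, min_eq_right (h.trans hab)]; linarith
    · rw [min_eq_left h]; rcases le_total c b with h' | h'
      · rw [min_eq_right h']; linarith
      · rw [min_eq_left h']; linarith
  have hcond : ∀ n, ∑ j ∈ Finset.range n, ξ j ≤ ∑ j ∈ Finset.range n, min t (η j) := by
    intro n
    by_contra hcon
    push_neg at hcon
    set ε := (∑ j ∈ Finset.range n, ξ j - ∑ j ∈ Finset.range n, min t (η j)) / (n + 1) with hε
    have hεpos : 0 < ε := by
      apply div_pos (by linarith) (by positivity)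
    obtain ⟨s, hsS, hst⟩ := exists_lt_of_csInf_lt hSne (show t < t + ε by linarith)
    have hts : t ≤ s := csInf_le hSbdd hsS
    have : ∑ j ∈ Finset.range n, min s (η j) ≤
        ∑ j ∈ Finset.range n, min t (η j) + n * ε := by
      calc ∑ j ∈ Finset.range n, min s (η j)
          ≤ ∑ j ∈ Finset.range n, (min t (η j) + (s - t)) :=
            Finset.sum_le_sum fun j _ => hmin_lip t s (η j) hts
        _ = ∑ j ∈ Finset.range n, min t (η j) + n * (s - t) := by
            rw [Finset.sum_add_distrib]; simp [mul_comm]; ring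
        _ ≤ ∑ j ∈ Finset.range n, min t (η j) + n * ε := by
            have : (n : ℝ) * (s - t) ≤ n * ε := by
              apply mul_le_mul_of_nonneg_left (by linarith) (Nat.cast_nonneg n)
            linarith
    have h2 := hsS.2 n
    have hne : (n : ℝ) * ε < (n + 1) * ε := by nlinarith
    have : (∑ j ∈ Finset.range n, ξ j - ∑ j ∈ Finset.range n, min t (η j)) = (n+1) * ε := by
      rw [hε]; field_simp
    linarith
  -- key: partial sums of differences get arbitrarily small
  set F : ℕ → ℝ := fun k => ∑ j ∈ Finset.range (k + 1), (min t (η j) - ξ j) with hF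
  have hFnonneg : ∀ k, 0 ≤ F k := by
    intro k
    have := hcond (k + 1)
    simp only [hF, Finset.sum_sub_distrib]
    linarith
  have key : ∀ ε > 0, ∃ k, F k < ε := by
    intro ε hε
    by_contra hcon
    push_neg at hcon
    rcases eq_or_lt_of_le htlb with heq | hlt
    · -- t = ξ 0, then F 0 = 0
      have : F 0 = 0 := by
        simp only [hF]
        simp [← heq, min_eq_left hξη0]
      have := hcon 0
      linarith
    · -- ξ 0 < t : decrease t a bit
      have hmid : (0:ℝ) < (t + ξ 0) / 2 := by have := hξ0 0; linarith
      obtain ⟨N₀, hN₀⟩ := (Metric.tendsto_atTop.mp hηl ((t + ξ 0)/2 - ξ 0) (by linarith))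
      set N := N₀ + 1 with hN
      have hNpos : (0:ℝ) < N := by positivity
      have hηsmall : ∀ j, N ≤ j → η j < (t + ξ 0) / 2 := by
        intro j hj
        have := hN₀ j (le_trans (Nat.le_succ N₀) hj)
        rw [Real.dist_eq, abs_sub_lt_iff] at this
        have := this.1
        have := hξ0 0
        linarith
      set δ := min ((t - ξ 0) / 2) (ε / N) with hδ
      have hδpos : 0 < δ := lt_min (by linarith) (div_pos hε hNpos)
      have hδ1 : δ ≤ (t - ξ 0) / 2 := min_le_left _ _
      have hδ2 : δ ≤ ε / N := min_le_right _ _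
      set s := t - δ with hs
      have hsξ : ξ 0 ≤ s := by simp only [hs]; linarith
      have hsmem : s ∈ S := by
        refine ⟨hsξ, fun n => ?_⟩
        -- difference bound
        set d : ℕ → ℝ := fun j => min t (η j) - min s (η j) with hd
        have hd0 : ∀ j, 0 ≤ d j := by
          intro j
          simp only [hd]
          have : min s (η j) ≤ min t (η j) :=
            min_le_min (by simp only [hs]; linarith) le_rfl
          linarith
        have hdδ : ∀ j, d j ≤ δ := by
          intro j
          have := hmin_lip s t (η j) (by simp only [hs]; linarith)
          simp only [hd, hs] at *
          linarith
        have hdN : ∀ j, N ≤ j → d j = 0 := by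
          intro j hj
          have hst : s ≤ t := by simp only [hs]; linarith
          have hηj : η j < s := by
            have := hηsmall j hj
            simp only [hs]
            linarith
          have hηt : η j ≤ t := hηj.le.trans hst
          simp only [hd, min_eq_right hηj.le, min_eq_right hηt]
          ring
        have hsum_d : ∑ j ∈ Finset.range n, d j ≤ ε := by
          have h1 : ∑ j ∈ Finset.range n, d j ≤ ∑ j ∈ Finset.range N, d j := by
            rcases le_total n N with h | h
            · exact Finset.sum_le_sum_of_subset_of_nonneg
                (Finset.range_subset_range.mpr h) (fun j _ _ => hd0 j)
            · rw [← Finset.sum_range_add_sum_Ico d h]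
              have : ∑ j ∈ Finset.Ico N n, d j = 0 :=
                Finset.sum_eq_zero fun j hj => hdN j (Finset.mem_Ico.mp hj).1
              linarith
          have h2 : ∑ j ∈ Finset.range N, d j ≤ N * δ := by
            calc ∑ j ∈ Finset.range N, d j ≤ ∑ j ∈ Finset.range N, δ :=
                  Finset.sum_le_sum fun j _ => hdδ j
              _ = N * δ := by simp [mul_comm]
          have h3 : (N:ℝ) * δ ≤ ε := by
            rw [← le_div_iff₀' hNpos] at *
            exact hδ2
          linarith
        -- conclude
        rcases Nat.eq_zero_or_pos n with rfl | hn
        · simp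
        · have hFn : ε ≤ F (n - 1) := hcon (n - 1)
          have hn1 : n - 1 + 1 = n := Nat.succ_pred_eq_of_pos hn
          have hFn' : ε ≤ ∑ j ∈ Finset.range n, (min t (η j) - ξ j) := by
            rw [← hn1]; exact hFn
          have : ∑ j ∈ Finset.range n, min t (η j) - ∑ j ∈ Finset.range n, min s (η j)
              = ∑ j ∈ Finset.range n, d j := by
            simp [hd, Finset.sum_sub_distrib]
          rw [Finset.sum_sub_distrib] at hFn'
          linarith
      have : t ≤ s := csInf_le hSbdd hsmem
      simp only [hs] at this
      linarith
  have hinf : (⨅ k : ℕ, ∑ j ∈ Finset.range (k + 1), (min t (η j) - ξ j)) = 0 := by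
    have hbdd : BddBelow (Set.range F) := ⟨0, by rintro _ ⟨k, rfl⟩; exact hFnonneg k⟩
    apply le_antisymm
    · by_contra hcon
      push_neg at hcon
      obtain ⟨k, hk⟩ := key _ hcon
      exact absurd (ciInf_le hbdd k) (by simp only [hF] at hk ⊢; linarith)
    · exact le_ciInf hFnonneg
  refine ⟨t, htlb, htub, hcond, fun s hs1 hs2 hs3 => csInf_le hSbdd ⟨hs1, hs3⟩, hinf, ?_⟩
  by_cases hattain : ∃ n, 1 ≤ n ∧ ∑ j ∈ Finset.range n, (min t (η j) - ξ j) = 0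
  · exact Or.inr hattain
  · left
    push_neg at hattain
    have hFpos : ∀ k, 0 < F k := by
      intro k
      rcases lt_or_eq_of_le (hFnonneg k) with h | h
      · exact h
      · exact absurd h.symm (hattain (k+1) (Nat.le_add_left 1 k))
    have hfnonneg : ∀ n : ℕ, 0 ≤ ∑ j ∈ Finset.range n, (min t (η j) - ξ j) := by
      intro n
      rcases Nat.eq_zero_or_pos n with rfl | hn
      · simp
      · have h := hFnonneg (n - 1)
        simp only [hF] at h
        rwa [Nat.sub_add_cancel hn] at h
    have hfreq : ∀ ε > 0, ∃ᶠ n in atTop,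
        ∑ j ∈ Finset.range n, (min t (η j) - ξ j) < ε := by
      intro ε hε
      rw [Filter.frequently_atTop]
      intro m
      set ε' := min ε ((Finset.range (m+1)).inf' (by simp) F) with hε'
      have hε'pos : 0 < ε' := by
        apply lt_min hε
        apply (Finset.lt_inf'_iff _).mpr
        intro k _
        exact hFpos k
      obtain ⟨k, hk⟩ := key ε' hε'pos
      refine ⟨k + 1, ?_, ?_⟩
      · by_contra hcon
        push_neg at hcon
        have hkm : k ∈ Finset.range (m+1) := Finset.mem_range.mpr (by omega)
        have : ε' ≤ F k := le_trans (min_le_right _ _) (Finset.inf'_le _ hkm)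
        linarith
      · have h := hk
        simp only [hF] at h
        exact lt_of_lt_of_le h (min_le_left _ _)
    have hbd : IsBoundedUnder (· ≥ ·) atTop
        (fun n => ∑ j ∈ Finset.range n, (min t (η j) - ξ j)) :=
      isBoundedUnder_of ⟨0, fun n => hfnonneg n⟩
    have hcb : IsCoboundedUnder (· ≥ ·) atTop
        (fun n => ∑ j ∈ Finset.range n, (min t (η j) - ξ j)) :=
      IsCoboundedUnder.of_frequently_le ((hfreq 1 one_pos).mono fun n h => h.le)
    apply le_antisymm
    · by_contra hcon
      push_neg at hcon
      have h2 := Filter.liminf_le_of_frequently_le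
        ((hfreq _ (half_pos hcon)).mono fun n h => h.le) hbd
      linarith
    · exact Filter.le_liminf_of_le hcb (Filter.Eventually.of_forall hfnonneg)
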